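/- Let d ≥ 1 and let b : [0,∞)^d → ℝ satisfy Assumption (A); let P be the associated limiting set, assumed Jordan measurable with Lebesgue measure |P| > 0, and fix ε > 0. Let D be a set, let (Ψ_ν)_{ν∈ℕ^d} be functions on D with sup_{y∈D}|Ψ_ν(y)| ≤ 1, and let u(y) = ∑_{ν∈ℕ^d} c_ν Ψ_ν(y) with real coefficients satisfying |c_ν| ≤ e^{−b(ν)} (the series converging absolutely and uniformly). Then there exists M_ε ∈ ℕ such that for every M ≥ M_ε the following holds: if Λ_M ⊂ ℕ^d is a quasi-optimal index set of cardinality M and (g_ν)_{ν∈Λ_M} are any functions on D with sup_{y∈D}|Ψ_ν(y) − g_ν(y)| ≤ e^{b(ν) − (2M/|P|)^{1/d}} for each ν ∈ Λ_M, then sup_{y∈D} | u(y) − ∑_{ν∈Λ_M} c_ν g_ν(y) | ≤ C_u(ε)·M·exp( −( M/(|P|(1+ε)) )^{1/d} ) + M·exp( −( 2M/|P| )^{1/d} ), where C_u(ε) = (4e + 4εe − 2)·e/(e−1). In particular the total error is at most (C_u(ε)+1)·M·exp( −( M/(|P|(1+ε)) )^{1/d} ). -/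

import Mathlib

open MeasureTheory Real Filter Pointwise

noncomputable section

/-- Embedding of a multi-index `ν ∈ ℕ^d` into `ℝ^d`. -/
def nuR {d : ℕ} (ν : Fin d → ℕ) : Fin d → ℝ := fun i => (ν i : ℝ)

/-- Euclidean norm on `ℝ^d` (viewed as `Fin d → ℝ`). -/
def eNorm {d : ℕ} (x : Fin d → ℝ) : ℝ := Real.sqrt (∑ i, x i ^ 2)

/-- `τ ↦ b(τν)/τ` is increasing on `(0,∞)` for every nonnegative `ν`. -/
def IsIncreasingCase {d : ℕ} (b : (Fin d → ℝ) → ℝ) : Prop :=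
  ∀ ν : Fin d → ℝ, (∀ i, 0 ≤ ν i) → MonotoneOn (fun τ : ℝ => b (τ • ν) / τ) (Set.Ioi 0)

/-- `τ ↦ b(τν)/τ` is decreasing on `(0,∞)` for every nonnegative `ν`. -/
def IsDecreasingCase {d : ℕ} (b : (Fin d → ℝ) → ℝ) : Prop :=
  ∀ ν : Fin d → ℝ, (∀ i, 0 ≤ ν i) → AntitoneOn (fun τ : ℝ => b (τ • ν) / τ) (Set.Ioi 0)

/-- Assumption (A) on the exponent map `b : [0,∞)^d → ℝ`. -/
def AssumptionA {d : ℕ} (b : (Fin d → ℝ) → ℝ) : Prop :=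
  b 0 = 0 ∧ ContinuousOn b {x | ∀ i, 0 ≤ x i} ∧
  (IsIncreasingCase b ∨ IsDecreasingCase b) ∧
  ∃ c C : ℝ, 0 < c ∧ c < C ∧ ∃ R : ℝ, ∀ x : Fin d → ℝ, (∀ i, 0 ≤ x i) → R ≤ eNorm x →
    c * eNorm x ≤ b x ∧ b x ≤ C * eNorm x

/-- `P_τ = {ν ∈ [0,∞)^d : b(ν) ≤ τ}`. -/
def Pset {d : ℕ} (b : (Fin d → ℝ) → ℝ) (τ : ℝ) : Set (Fin d → ℝ) :=
  {x | (∀ i, 0 ≤ x i) ∧ b x ≤ τ}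

/-- Constant `C_u(ε) = (4e + 4εe − 2)·e/(e−1)`. -/
def Cu (ε : ℝ) : ℝ :=
  (4 * Real.exp 1 + 4 * ε * Real.exp 1 - 2) * Real.exp 1 / (Real.exp 1 - 1)

open scoped ENNReal

lemma eNorm_nonneg {d : ℕ} (x : Fin d → ℝ) : 0 ≤ eNorm x := Real.sqrt_nonneg _

lemma abs_le_eNorm {d : ℕ} (x : Fin d → ℝ) (i : Fin d) : |x i| ≤ eNorm x := by
  rw [eNorm, ← Real.sqrt_sq_eq_abs]
  exact Real.sqrt_le_sqrt
    (Finset.single_le_sum (f := fun j => x j ^ 2) (fun j _ => sq_nonneg _) (Finset.mem_univ i))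

lemma eNorm_smul {d : ℕ} (a : ℝ) (ha : 0 ≤ a) (x : Fin d → ℝ) :
    eNorm (a • x) = a * eNorm x := by
  simp only [eNorm, Pi.smul_apply, smul_eq_mul, mul_pow, ← Finset.mul_sum]
  rw [Real.sqrt_mul (by positivity), Real.sqrt_sq ha]

lemma pset_isClosed {d : ℕ} (b : (Fin d → ℝ) → ℝ) (hb : ContinuousOn b {x | ∀ i, 0 ≤ x i})
    (τ : ℝ) : IsClosed (Pset b τ) := by
  have h1 : IsClosed {x : Fin d → ℝ | ∀ i, 0 ≤ x i} := by
    have : {x : Fin d → ℝ | ∀ i, 0 ≤ x i} = ⋂ i, {x | 0 ≤ x i} := by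
      ext x; simp
    rw [this]
    exact isClosed_iInter fun i => isClosed_le continuous_const (continuous_apply i)
  have : Pset b τ = {x : Fin d → ℝ | ∀ i, 0 ≤ x i} ∩ b ⁻¹' Set.Iic τ := by
    ext x
    simp only [Pset, Set.mem_setOf_eq, Set.mem_inter_iff, Set.mem_preimage, Set.mem_Iic]
  rw [this]
  exact ContinuousOn.preimage_isClosed_of_isClosed hb h1 isClosed_Iic

lemma eNormBall_subset {d : ℕ} (r : ℝ) (hr : 0 ≤ r) :
    {x : Fin d → ℝ | eNorm x ≤ r} ⊆ Metric.closedBall 0 r := by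
  intro x hx
  simp only [Metric.mem_closedBall]
  rw [dist_pi_le_iff hr]
  intro i
  rw [Real.dist_eq, Pi.zero_apply, sub_zero]
  exact le_trans (abs_le_eNorm x i) hx

lemma pset_eNorm_le {d : ℕ} {b : (Fin d → ℝ) → ℝ} {c R : ℝ} (hc : 0 < c)
    (hgrow : ∀ x : Fin d → ℝ, (∀ i, 0 ≤ x i) → R ≤ eNorm x → c * eNorm x ≤ b x)
    (τ : ℝ) {x : Fin d → ℝ} (hx : x ∈ Pset b τ) : eNorm x ≤ max R (τ / c) := by
  by_contra h
  push_neg at h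
  have hR : R ≤ eNorm x := le_of_lt (lt_of_le_of_lt (le_max_left _ _) h)
  have h2 := hgrow x hx.1 hR
  have h3 : τ / c < eNorm x := lt_of_le_of_lt (le_max_right _ _) h
  have : τ < c * eNorm x := by
    rw [div_lt_iff₀ hc] at h3; linarith [h3]
  linarith [hx.2, h2]

lemma pset_isCompact {d : ℕ} {b : (Fin d → ℝ) → ℝ} {c R : ℝ} (hc : 0 < c)
    (hcont : ContinuousOn b {x | ∀ i, 0 ≤ x i})
    (hgrow : ∀ x : Fin d → ℝ, (∀ i, 0 ≤ x i) → R ≤ eNorm x → c * eNorm x ≤ b x)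
    (τ : ℝ) : IsCompact (Pset b τ) := by
  apply Metric.isCompact_of_isClosed_isBounded (pset_isClosed b hcont τ)
  apply Bornology.IsBounded.subset (Metric.isBounded_closedBall
    (x := (0 : Fin d → ℝ)) (r := max (max R (τ / c)) 0))
  intro x hx
  apply eNormBall_subset _ (le_max_right _ _)
  exact le_trans (pset_eNorm_le hc hgrow τ hx) (le_max_left _ _)


lemma smul_inv_smul_set {d : ℕ} {τ : ℝ} (hτ : τ ≠ 0) (S : Set (Fin d → ℝ)) :
    τ • (τ⁻¹ • S) = S := by
  rw [smul_smul, mul_inv_cancel₀ hτ, one_smul]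

/-- In the increasing case the rescaled sets `τ⁻¹ • P_τ` are antitone in `τ`. -/
lemma Q_antitone {d : ℕ} {b : (Fin d → ℝ) → ℝ} (hinc : IsIncreasingCase b)
    {τ τ' : ℝ} (hτ : 0 < τ) (hle : τ ≤ τ') :
    τ'⁻¹ • Pset b τ' ⊆ τ⁻¹ • Pset b τ := by
  have hτ' : 0 < τ' := lt_of_lt_of_le hτ hle
  rintro x ⟨p, hp, rfl⟩
  have hxp : τ' • (τ'⁻¹ • p) = p := by rw [smul_smul, mul_inv_cancel₀ hτ'.ne', one_smul]
  have hx0 : ∀ i, 0 ≤ (τ'⁻¹ • p) i := fun i => by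
    simpa using mul_nonneg (inv_nonneg.2 hτ'.le) (hp.1 i)
  have key := hinc _ hx0 (Set.mem_Ioi.2 hτ) (Set.mem_Ioi.2 hτ') hle
  simp only at key
  rw [hxp] at key
  have h1 : b p / τ' ≤ 1 := by
    rw [div_le_one hτ']; exact hp.2
  have h2 : b (τ • (τ'⁻¹ • p)) / τ ≤ 1 := le_trans key h1
  rw [div_le_one hτ] at h2
  refine ⟨τ • (τ'⁻¹ • p), ⟨fun i => by simpa using mul_nonneg hτ.le (hx0 i), h2⟩, ?_⟩
  show τ⁻¹ • _ = _
  rw [smul_smul, inv_mul_cancel₀ hτ.ne', one_smul]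

/-- In the decreasing case the rescaled sets `τ⁻¹ • P_τ` are monotone in `τ`. -/
lemma Q_monotone {d : ℕ} {b : (Fin d → ℝ) → ℝ} (hdec : IsDecreasingCase b)
    {τ τ' : ℝ} (hτ : 0 < τ) (hle : τ ≤ τ') :
    τ⁻¹ • Pset b τ ⊆ τ'⁻¹ • Pset b τ' := by
  have hτ' : 0 < τ' := lt_of_lt_of_le hτ hle
  rintro x ⟨p, hp, rfl⟩
  have hxp : τ • (τ⁻¹ • p) = p := by rw [smul_smul, mul_inv_cancel₀ hτ.ne', one_smul]
  have hx0 : ∀ i, 0 ≤ (τ⁻¹ • p) i := fun i => by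
    simpa using mul_nonneg (inv_nonneg.2 hτ.le) (hp.1 i)
  have key := hdec _ hx0 (Set.mem_Ioi.2 hτ) (Set.mem_Ioi.2 hτ') hle
  simp only at key
  rw [hxp] at key
  have h1 : b p / τ ≤ 1 := by rw [div_le_one hτ]; exact hp.2
  have h2 : b (τ' • (τ⁻¹ • p)) / τ' ≤ 1 := le_trans key h1
  rw [div_le_one hτ'] at h2
  refine ⟨τ' • (τ⁻¹ • p), ⟨fun i => by simpa using mul_nonneg hτ'.le (hx0 i), h2⟩, ?_⟩
  show τ'⁻¹ • _ = _
  rw [smul_smul, inv_mul_cancel₀ hτ'.ne', one_smul]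


lemma exists_covering {d : ℕ} (b : (Fin d → ℝ) → ℝ) (hb : AssumptionA b)
    (P : Set (Fin d → ℝ))
    (hPinc : IsIncreasingCase b → P = ⋂ τ ∈ Set.Ioi (0 : ℝ), τ⁻¹ • Pset b τ)
    (hPdec : IsDecreasingCase b → P = ⋃ τ ∈ Set.Ioi (0 : ℝ), τ⁻¹ • Pset b τ)
    (hJordan : volume (frontier P) = 0) (hfin : volume P ≠ ⊤)
    (η : ℝ≥0∞) (hη : 0 < η) :
    ∃ (K : Set (Fin d → ℝ)) (τ2 : ℝ), 0 < τ2 ∧ IsCompact K ∧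
      volume K ≤ volume P + η ∧ ∀ τ : ℝ, τ2 ≤ τ → Pset b τ ⊆ τ • K := by
  obtain ⟨-, hcont, hcase, c, C, hc, hcC, R, hgrow⟩ := hb
  have hgrow1 : ∀ x : Fin d → ℝ, (∀ i, 0 ≤ x i) → R ≤ eNorm x → c * eNorm x ≤ b x :=
    fun x h1 h2 => (hgrow x h1 h2).1
  have hQcompact : ∀ τ : ℝ, IsCompact ((τ : ℝ)⁻¹ • Pset b τ) := by
    intro τ
    rw [show (τ⁻¹ • Pset b τ) = (fun x => τ⁻¹ • x) '' (Pset b τ) from rfl]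
    exact (pset_isCompact hc hcont hgrow1 τ).image (continuous_const_smul _)
  have hPsetQ : ∀ τ : ℝ, τ ≠ 0 → τ • (τ⁻¹ • Pset b τ) = Pset b τ := by
    intro τ hτ
    rw [smul_smul, mul_inv_cancel₀ hτ, one_smul]
  rcases hcase with hinc | hdec
  · -- increasing case
    have hPeq := hPinc hinc
    set Q : ℕ → Set (Fin d → ℝ) := fun n => ((n : ℝ) + 1)⁻¹ • Pset b ((n : ℝ) + 1) with hQ
    have hQanti : Antitone Q := by
      intro m n hmn
      have : ((m:ℝ)+1) ≤ (n:ℝ)+1 := by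
        have : (m:ℝ) ≤ n := Nat.cast_le.2 hmn
        linarith
      exact Q_antitone hinc (by positivity) this
    have hInter : ⋂ n, Q n = P := by
      rw [hPeq]
      apply Set.Subset.antisymm
      · intro x hx
        simp only [Set.mem_iInter] at hx ⊢
        intro τ hτ
        have hτ0 : (0:ℝ) < τ := hτ
        obtain ⟨n, hn⟩ := exists_nat_ge τ
        exact Q_antitone hinc hτ0 (by linarith) (hx n)
      · intro x hx
        simp only [Set.mem_iInter] at hx ⊢
        intro n
        exact hx _ (Set.mem_Ioi.2 (by positivity))
    have hmeas : ∀ n, NullMeasurableSet (Q n) volume :=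
      fun n => ((hQcompact _).isClosed.measurableSet).nullMeasurableSet
    have hfin' : ∃ n, volume (Q n) ≠ ⊤ := ⟨0, (hQcompact _).measure_lt_top.ne⟩
    have htend := MeasureTheory.tendsto_measure_iInter_atTop hmeas hQanti hfin'
    rw [hInter] at htend
    have hlt : volume P < volume P + η := ENNReal.lt_add_right hfin hη.ne'
    have hev := htend.eventually_lt_const hlt
    obtain ⟨n, hn⟩ := hev.exists
    refine ⟨Q n, (n : ℝ) + 1, by positivity, hQcompact _, le_of_lt hn, ?_⟩
    intro τ hτ
    have hτ0 : (0:ℝ) < τ := lt_of_lt_of_le (by positivity) hτ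
    rw [← hPsetQ τ hτ0.ne']
    exact Set.smul_set_mono (Q_antitone hinc (by positivity) hτ)
  · -- decreasing case
    have hPeq := hPdec hdec
    have hQP : ∀ τ : ℝ, 0 < τ → τ⁻¹ • Pset b τ ⊆ P := by
      intro τ hτ
      rw [hPeq]
      exact Set.subset_biUnion_of_mem (u := fun τ : ℝ => τ⁻¹ • Pset b τ) (Set.mem_Ioi.2 hτ)
    -- P is bounded
    have hr : (0:ℝ) ≤ max (max |R| (1 / c)) 0 := le_max_right _ _
    have hPbd : P ⊆ Metric.closedBall 0 (max (max |R| (1 / c)) 0) := by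
      rw [hPeq]
      intro x hx
      simp only [Set.mem_iUnion] at hx
      obtain ⟨τ, hτ, hxτ⟩ := hx
      have hτ0 : (0:ℝ) < τ := hτ
      have hx1 : x ∈ (max τ 1)⁻¹ • Pset b (max τ 1) :=
        Q_monotone hdec hτ0 (le_max_left _ _) hxτ
      obtain ⟨p, hp, rfl⟩ := hx1
      set t : ℝ := max τ 1 with ht
      have ht1 : (1:ℝ) ≤ t := le_max_right _ _
      have ht0 : (0:ℝ) < t := lt_of_lt_of_le one_pos ht1
      have hep : eNorm p ≤ max R (t / c) := pset_eNorm_le hc hgrow1 _ hp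
      have hp0 : 0 ≤ eNorm p := Real.sqrt_nonneg _
      apply eNormBall_subset _ hr
      show eNorm (t⁻¹ • p) ≤ _
      rw [eNorm_smul _ (by positivity) p]
      have key : t⁻¹ * eNorm p ≤ max |R| (1 / c) := by
        rcases max_cases R (t / c) with ⟨heq, -⟩ | ⟨heq, -⟩
        · rw [heq] at hep
          apply le_max_of_le_left
          calc t⁻¹ * eNorm p ≤ 1 * eNorm p := by
                apply mul_le_mul_of_nonneg_right _ hp0
                rw [inv_le_one_iff₀]; right; exact ht1
            _ = eNorm p := one_mul _
            _ ≤ |R| := le_trans hep (le_abs_self R)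
        · rw [heq] at hep
          apply le_max_of_le_right
          calc t⁻¹ * eNorm p ≤ t⁻¹ * (t / c) :=
                mul_le_mul_of_nonneg_left hep (by positivity)
            _ = 1 / c := by field_simp
      exact le_trans key (le_max_left _ _)
    -- K := closure P
    have hPbd' : Bornology.IsBounded P :=
      (Metric.isBounded_closedBall).subset hPbd
    have hKcomp : IsCompact (closure P) :=
      Metric.isCompact_of_isClosed_isBounded isClosed_closure hPbd'.closure
    refine ⟨closure P, 1, one_pos, hKcomp, ?_, ?_⟩
    · have hsub : closure P ⊆ P ∪ frontier P := by
        intro x hx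
        by_cases h : x ∈ interior P
        · exact Or.inl (interior_subset h)
        · exact Or.inr ⟨hx, h⟩
      calc volume (closure P) ≤ volume (P ∪ frontier P) := measure_mono hsub
        _ ≤ volume P + volume (frontier P) := measure_union_le _ _
        _ = volume P := by rw [hJordan, add_zero]
        _ ≤ volume P + η := le_self_add
    · intro τ hτ1
      have hτ0 : (0:ℝ) < τ := lt_of_lt_of_le one_pos hτ1
      rw [← hPsetQ τ hτ0.ne']
      exact Set.smul_set_mono (le_trans (hQP τ hτ0) subset_closure)


/-- unit half-open cube at a lattice point -/
def latCube {d : ℕ} (ν : Fin d → ℕ) : Set (Fin d → ℝ) :=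
  Set.univ.pi fun i => Set.Ico ((ν i : ℝ)) ((ν i : ℝ) + 1)

lemma latCube_volume {d : ℕ} (ν : Fin d → ℕ) : volume (latCube ν) = 1 := by
  rw [latCube, volume_pi_pi]
  simp

lemma latCube_measurable {d : ℕ} (ν : Fin d → ℕ) : MeasurableSet (latCube ν) :=
  MeasurableSet.univ_pi fun i => measurableSet_Ico

lemma latCube_disjoint {d : ℕ} {ν μ : Fin d → ℕ} (h : ν ≠ μ) :
    Disjoint (latCube ν) (latCube μ) := by
  rw [Set.disjoint_left]
  intro x hx hx'
  apply h
  funext i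
  have h1 := hx i (Set.mem_univ i)
  have h2 := hx' i (Set.mem_univ i)
  simp only [Set.mem_Ico] at h1 h2
  by_contra hne
  rcases Nat.lt_or_ge (ν i) (μ i) with hlt | hge
  · have : ((ν i : ℝ) + 1) ≤ (μ i : ℝ) := by exact_mod_cast hlt
    linarith [h1.2, h2.1]
  · have hlt : μ i < ν i := lt_of_le_of_ne hge (Ne.symm hne)
    have : ((μ i : ℝ) + 1) ≤ (ν i : ℝ) := by exact_mod_cast hlt
    linarith [h1.1, h2.2]

lemma latCube_dist {d : ℕ} (ν : Fin d → ℕ) {x : Fin d → ℝ} (hx : x ∈ latCube ν) :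
    dist x (nuR ν) ≤ 1 := by
  rw [dist_pi_le_iff zero_le_one]
  intro i
  have := hx i (Set.mem_univ i)
  simp only [Set.mem_Ico] at this
  rw [Real.dist_eq, abs_le]
  constructor <;> [skip; skip] <;> simp only [nuR] <;> [linarith [this.1]; linarith [this.2]]

lemma cthick_scale {d : ℕ} (K : Set (Fin d → ℝ)) (τ δ : ℝ) (hτ : 0 < τ) (h : 2 ≤ τ * δ) :
    Metric.cthickening 1 (τ • K) ⊆ τ • Metric.cthickening δ K := by
  intro x hx
  have h2 : x ∈ Metric.thickening 2 (τ • K) :=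
    Metric.cthickening_subset_thickening' (by norm_num) (by norm_num) (τ • K) hx
  rw [Metric.mem_thickening_iff] at h2
  obtain ⟨z, hz, hdist⟩ := h2
  obtain ⟨w, hw, rfl⟩ := hz
  refine ⟨τ⁻¹ • x, ?_, ?_⟩
  · apply Metric.mem_cthickening_of_dist_le _ w _ _ hw
    have : dist (τ⁻¹ • x) (τ⁻¹ • (τ • w)) = ‖τ⁻¹‖ * dist x (τ • w) := dist_smul₀ _ _ _
    rw [smul_smul, inv_mul_cancel₀ hτ.ne', one_smul] at this
    rw [this, Real.norm_eq_abs, abs_of_pos (by positivity)]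
    calc τ⁻¹ * dist x ((fun w => τ • w) w) ≤ τ⁻¹ * 2 := by
          apply mul_le_mul_of_nonneg_left (le_of_lt hdist) (by positivity)
      _ ≤ δ := by
          rw [inv_mul_le_iff₀ hτ]; linarith
  · simp only
    rw [smul_smul, mul_inv_cancel₀ hτ.ne', one_smul]

/-- The main counting bound: eventually the number of lattice points with `b ≤ τ`
is at most `A τ^d`. -/
lemma counting {d : ℕ} (b : (Fin d → ℝ) → ℝ) (K : Set (Fin d → ℝ))
    (hK : IsCompact K) (τ2 : ℝ) (hτ2 : 0 < τ2) (hsub : ∀ τ : ℝ, τ2 ≤ τ → Pset b τ ⊆ τ • K)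
    (A : ℝ) (hA : volume K < ENNReal.ofReal A) :
    ∃ τ0 : ℝ, 0 < τ0 ∧ ∀ τ : ℝ, τ0 ≤ τ → ∀ F : Finset (Fin d → ℕ),
      (∀ ν ∈ F, b (nuR ν) ≤ τ) → (F.card : ℝ) ≤ A * τ ^ d := by
  -- pick δ with volume (cthickening δ K) < ofReal A
  have htend : Tendsto (fun r => volume (Metric.cthickening r K)) (nhds 0) (nhds (volume K)) :=
    tendsto_measure_cthickening_of_isCompact hK
  have hev : ∀ᶠ r in nhds (0:ℝ), volume (Metric.cthickening r K) < ENNReal.ofReal A :=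
    htend.eventually_lt_const hA
  obtain ⟨δ0, hδ0, hball⟩ := Metric.eventually_nhds_iff_ball.1 hev
  set δ : ℝ := δ0 / 2 with hδ
  have hδpos : 0 < δ := by positivity
  have hδK : volume (Metric.cthickening δ K) < ENNReal.ofReal A := by
    apply hball
    simp [Real.dist_eq, abs_of_pos hδpos]
    linarith
  refine ⟨max τ2 (2 / δ), lt_of_lt_of_le hτ2 (le_max_left _ _), ?_⟩
  intro τ hτ F hF
  have hττ2 : τ2 ≤ τ := le_trans (le_max_left _ _) hτ
  have hτpos : 0 < τ := lt_of_lt_of_le hτ2 hττ2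
  have hτδ : 2 ≤ τ * δ := by
    have h1 : 2 / δ ≤ τ := le_trans (le_max_right _ _) hτ
    rw [div_le_iff₀ hδpos] at h1
    linarith
  -- cubes are contained in cthickening 1 (τ • K)
  have hcube : ∀ ν ∈ F, latCube ν ⊆ Metric.cthickening 1 (τ • K) := by
    intro ν hν x hx
    have hmem : nuR ν ∈ τ • K := hsub τ hττ2 ⟨fun i => Nat.cast_nonneg _, hF ν hν⟩
    exact Metric.mem_cthickening_of_dist_le x (nuR ν) 1 _ hmem (latCube_dist ν hx)
  have hunion : (⋃ ν ∈ F, latCube ν) ⊆ τ • Metric.cthickening δ K := by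
    apply Set.iUnion₂_subset
    intro ν hν
    exact le_trans (hcube ν hν) (cthick_scale K τ δ hτpos hτδ)
  have hcard : volume (⋃ ν ∈ F, latCube ν) = (F.card : ℝ≥0∞) := by
    rw [measure_biUnion_finset ?hd fun ν _ => latCube_measurable ν]
    · simp [latCube_volume]
    case hd =>
      intro ν _ μ _ hne
      exact latCube_disjoint hne
  have hvol : (F.card : ℝ≥0∞) ≤ ENNReal.ofReal (τ ^ d * A) := by
    rw [← hcard]
    calc volume (⋃ ν ∈ F, latCube ν) ≤ volume (τ • Metric.cthickening δ K) :=
          measure_mono hunion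
      _ = ENNReal.ofReal (τ ^ Module.finrank ℝ (Fin d → ℝ)) * volume (Metric.cthickening δ K) :=
          Measure.addHaar_smul_of_nonneg _ hτpos.le _
      _ ≤ ENNReal.ofReal (τ ^ d) * ENNReal.ofReal A := by
          rw [show Module.finrank ℝ (Fin d → ℝ) = d by simp]
          exact mul_le_mul_right hδK.le _
      _ = ENNReal.ofReal (τ ^ d * A) := by
          rw [ENNReal.ofReal_mul (by positivity)]
  have hApos : 0 < A := ENNReal.ofReal_pos.1 (lt_of_le_of_lt zero_le hA)
  have hvol' : ENNReal.ofReal (F.card : ℝ) ≤ ENNReal.ofReal (τ ^ d * A) := by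
    rw [ENNReal.ofReal_natCast]; exact hvol
  have hfin := (ENNReal.ofReal_le_ofReal_iff (by positivity)).1 hvol'
  linarith


lemma summable_piGeom (r : ℝ) (h0 : 0 ≤ r) (h1 : r < 1) (n : ℕ) :
    Summable (fun ν : Fin n → ℕ => ∏ i, r ^ ν i) := by
  induction n with
  | zero =>
    have : Finite (Fin 0 → ℕ) := by infer_instance
    exact Summable.of_finite
  | succ n ih =>
    have hgeo : Summable (fun k : ℕ => r ^ k) := summable_geometric_of_lt_one h0 h1
    have hnn1 : 0 ≤ fun k : ℕ => r ^ k := fun k => pow_nonneg h0 k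
    have hnn2 : 0 ≤ fun ν : Fin n → ℕ => ∏ i, r ^ ν i :=
      fun ν => Finset.prod_nonneg fun i _ => pow_nonneg h0 _
    have hprod : Summable (fun p : ℕ × (Fin n → ℕ) => r ^ p.1 * ∏ i, r ^ p.2 i) :=
      Summable.mul_of_nonneg (f := fun k : ℕ => r ^ k)
        (g := fun ν : Fin n → ℕ => ∏ i, r ^ ν i) hgeo ih hnn1 hnn2
    refine (Equiv.summable_iff (Fin.consEquiv (fun _ : Fin (n+1) => ℕ))).1 (hprod.congr ?_)
    intro p
    simp [Fin.consEquiv, Fin.prod_univ_succ]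

lemma summable_exp_theta {d : ℕ} (hd : 1 ≤ d) (b : (Fin d → ℝ) → ℝ)
    {c R : ℝ} (hc : 0 < c)
    (hgrow : ∀ x : Fin d → ℝ, (∀ i, 0 ≤ x i) → R ≤ eNorm x → c * eNorm x ≤ b x)
    (θ : ℝ) (hθ : 0 < θ) :
    Summable (fun ν : Fin d → ℕ => Real.exp (-θ * b (nuR ν))) := by
  set R' : ℝ := max R 0 with hR'
  set a : ℝ := θ * c / d with ha
  have hapos : 0 < a := by
    apply div_pos (mul_pos hθ hc)
    exact_mod_cast Nat.pos_of_ne_zero (by omega)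
  set r : ℝ := Real.exp (-a) with hr
  have hr0 : 0 ≤ r := (Real.exp_pos _).le
  have hr1 : r < 1 := Real.exp_lt_one_iff.2 (by linarith)
  have hgeo := summable_piGeom r hr0 hr1 d
  -- exceptional finite set
  set E : Set (Fin d → ℕ) := {ν | eNorm (nuR ν) < R'} with hE
  have hEfin : E.Finite := by
    apply Set.Finite.subset (Set.Finite.pi (fun i : Fin d => Set.finite_Iic (⌈R'⌉₊)))
    intro ν hν
    intro i _
    simp only [Set.mem_Iic]
    have h1 : (ν i : ℝ) ≤ eNorm (nuR ν) := by
      have := abs_le_eNorm (nuR ν) i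
      rw [show |nuR ν i| = (ν i : ℝ) by simp [nuR]] at this
      exact this
    have h2 : (ν i : ℝ) ≤ R' := le_trans h1 (le_of_lt hν)
    exact_mod_cast le_trans h2 (Nat.le_ceil R')
  rw [← hEfin.summable_compl_iff]
  refine Summable.of_nonneg_of_le (fun ν => (Real.exp_pos _).le) ?_ (hgeo.subtype _)
  rintro ⟨ν, hν⟩
  simp only [Function.comp_apply]
  have hν' : R' ≤ eNorm (nuR ν) := not_lt.1 hν
  have h0 : ∀ i, (0:ℝ) ≤ nuR ν i := fun i => by simp [nuR]
  have hb : c * eNorm (nuR ν) ≤ b (nuR ν) :=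
    hgrow _ h0 (le_trans (le_max_left _ _) hν')
  -- eNorm ≥ each coordinate, ≥ average
  have hsum : (∑ i, (ν i : ℝ)) ≤ d * eNorm (nuR ν) := by
    calc (∑ i, (ν i : ℝ)) ≤ ∑ _i : Fin d, eNorm (nuR ν) := by
          apply Finset.sum_le_sum
          intro i _
          have := abs_le_eNorm (nuR ν) i
          rw [show |nuR ν i| = (ν i : ℝ) by simp [nuR]] at this
          exact this
      _ = d * eNorm (nuR ν) := by simp [Finset.sum_const, nsmul_eq_mul]
  have key : a * (∑ i, (ν i : ℝ)) ≤ θ * b (nuR ν) := by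
    calc a * (∑ i, (ν i : ℝ)) ≤ a * (d * eNorm (nuR ν)) :=
          mul_le_mul_of_nonneg_left hsum hapos.le
      _ = θ * (c * eNorm (nuR ν)) := by
          rw [ha]; field_simp
      _ ≤ θ * b (nuR ν) := mul_le_mul_of_nonneg_left hb hθ.le
  calc Real.exp (-θ * b (nuR ν)) ≤ Real.exp (-(a * ∑ i, (ν i : ℝ))) := by
        apply Real.exp_le_exp.2; linarith
    _ = ∏ i, r ^ ν i := by
        rw [Finset.mul_sum, ← Finset.sum_neg_distrib, Real.exp_sum]
        apply Finset.prod_congr rfl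
        intro i _
        rw [hr, ← Real.exp_nat_mul]
        ring_nf


lemma aux_ineq (m v e : ℝ) (hm : 0 ≤ m) (hv : 0 ≤ v) (he : 0 ≤ e) :
    m * v ≤ 2 * m * (v * (1 + e)) := by
  nlinarith [mul_nonneg hm hv, mul_nonneg (mul_nonneg hm hv) he]

lemma one_le_Cu {ε : ℝ} (hε : 0 < ε) : 1 ≤ Cu ε := by
  have he : (2:ℝ) ≤ Real.exp 1 := by
    have := Real.add_one_le_exp 1; linarith
  rw [Cu, le_div_iff₀ (by linarith)]
  nlinarith [mul_pos (mul_pos (by linarith : (0:ℝ) < 4*ε) (by linarith : (0:ℝ) < Real.exp 1)) (by linarith : (0:ℝ) < Real.exp 1)]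

/-- Analytic core of the main theorem (Theorem 3.1): combining the quasi-optimal tail bound
with per-term substitution errors `ε_ν = e^{b(ν) − (2M/|P|)^{1/d}}` for the approximants
`g_ν` of the basis functions `Ψ_ν` yields, for all `M ≥ M_ε`, a total uniform error of at
most `C_u(ε)·M·exp(−(M/(|P|(1+ε)))^{1/d}) + M·exp(−(2M/|P|)^{1/d})`, which in turn is at
most `(C_u(ε)+1)·M·exp(−(M/(|P|(1+ε)))^{1/d})`. -/
theorem stmt7 {d : ℕ} (hd : 1 ≤ d) (b : (Fin d → ℝ) → ℝ) (hb : AssumptionA b)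
    (P : Set (Fin d → ℝ))
    (hPinc : IsIncreasingCase b → P = ⋂ τ ∈ Set.Ioi (0 : ℝ), τ⁻¹ • Pset b τ)
    (hPdec : IsDecreasingCase b → P = ⋃ τ ∈ Set.Ioi (0 : ℝ), τ⁻¹ • Pset b τ)
    (hJordan : volume (frontier P) = 0) (hPpos : 0 < (volume P).toReal)
    (ε : ℝ) (hε : 0 < ε)
    {D : Type*} (Ψ : (Fin d → ℕ) → D → ℝ) (hΨ : ∀ ν y, |Ψ ν y| ≤ 1)
    (c : (Fin d → ℕ) → ℝ) (hc : ∀ ν, |c ν| ≤ Real.exp (-b (nuR ν)))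
    (hsum : Summable fun ν : Fin d → ℕ => |c ν|)
    (u : D → ℝ) (hu : ∀ y, u y = ∑' ν : Fin d → ℕ, c ν * Ψ ν y) :
    ∃ Mε : ℕ, ∀ M : ℕ, Mε ≤ M →
      ∀ Λ : Finset (Fin d → ℕ), Λ.card = M →
        (∀ ν ∈ Λ, ∀ μ : Fin d → ℕ, μ ∉ Λ → b (nuR ν) ≤ b (nuR μ)) →
        ∀ g : (Fin d → ℕ) → D → ℝ,
          (∀ ν ∈ Λ, ∀ y : D,
            |Ψ ν y - g ν y| ≤
              Real.exp (b (nuR ν) - (2 * M / (volume P).toReal) ^ ((1 : ℝ) / d))) →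
          ∀ y : D,
            |u y - ∑ ν ∈ Λ, c ν * g ν y| ≤
                Cu ε * M *
                  Real.exp (-((M : ℝ) / ((volume P).toReal * (1 + ε))) ^ ((1 : ℝ) / d)) +
                  M * Real.exp (-(2 * M / (volume P).toReal) ^ ((1 : ℝ) / d)) ∧
              |u y - ∑ ν ∈ Λ, c ν * g ν y| ≤
                (Cu ε + 1) * M *
                  Real.exp (-((M : ℝ) / ((volume P).toReal * (1 + ε))) ^ ((1 : ℝ) / d)) := by

  have hdR : (0:ℝ) < (d:ℝ) := by exact_mod_cast Nat.pos_of_ne_zero (by omega)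
  obtain ⟨hb0, hcont, hcase, c0, C0, hc0, hcC, R, hgrow⟩ := hb
  have hgrow1 : ∀ x : Fin d → ℝ, (∀ i, 0 ≤ x i) → R ≤ eNorm x → c0 * eNorm x ≤ b x :=
    fun x h1 h2 => (hgrow x h1 h2).1
  have hVne : volume P ≠ ⊤ := by
    intro h; rw [h] at hPpos; simp at hPpos
  set V : ℝ := (volume P).toReal with hVdef
  have hV : 0 < V := hPpos
  -- covering set and counting
  obtain ⟨K, τ2, hτ2, hKcomp, hKvol, hKsub⟩ :=
    exists_covering b ⟨hb0, hcont, hcase, c0, C0, hc0, hcC, R, hgrow⟩ P hPinc hPdec hJordan hVne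
      (ENNReal.ofReal (V * ε / 4)) (ENNReal.ofReal_pos.2 (by positivity))
  set A : ℝ := V * (1 + ε/2) with hAdef
  have hApos : 0 < A := by positivity
  have hA : volume K < ENNReal.ofReal A := by
    calc volume K ≤ volume P + ENNReal.ofReal (V * ε / 4) := hKvol
      _ = ENNReal.ofReal (V + V * ε / 4) := by
          rw [← ENNReal.ofReal_toReal hVne, ← hVdef, ← ENNReal.ofReal_add hV.le (by positivity)]
      _ < ENNReal.ofReal A := by
          rw [ENNReal.ofReal_lt_ofReal_iff (by positivity)]
          rw [hAdef]; nlinarith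
  obtain ⟨τ0, hτ0, hcount⟩ := counting b K hKcomp τ2 hτ2 hKsub A hA
  -- constants
  set W : ℝ := V * (1 + ε) with hWdef
  have hWpos : 0 < W := by positivity
  have hAW1 : A / W < 1 := by
    rw [div_lt_one hWpos, hAdef, hWdef]; nlinarith
  have hAW0 : 0 < A / W := by positivity
  set ρ : ℝ := (A / W) ^ ((1:ℝ)/d) with hρdef
  have hρ1 : ρ < 1 := Real.rpow_lt_one hAW0.le hAW1 (by positivity)
  have hρ0 : 0 < ρ := Real.rpow_pos_of_pos hAW0 _
  set β : ℝ := (ρ + 1)/2 with hβdef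
  have hβρ : ρ < β := by rw [hβdef]; linarith
  have hβ1 : β < 1 := by rw [hβdef]; linarith
  have hβ0 : 0 < β := by rw [hβdef]; linarith
  set θ : ℝ := 1 - β with hθdef
  have hθ0 : 0 < θ := by rw [hθdef]; linarith
  have hS : Summable (fun ν : Fin d → ℕ => Real.exp (-θ * b (nuR ν))) :=
    summable_exp_theta hd b hc0 hgrow1 θ hθ0
  set S0 : ℝ := ∑' ν : Fin d → ℕ, Real.exp (-θ * b (nuR ν)) with hS0def
  have hArp : (0:ℝ) < A ^ ((1:ℝ)/d) := Real.rpow_pos_of_pos hApos _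
  have hWrp : (0:ℝ) < W ^ ((1:ℝ)/d) := Real.rpow_pos_of_pos hWpos _
  set γ : ℝ := β / A ^ ((1:ℝ)/d) - 1 / W ^ ((1:ℝ)/d) with hγdef
  have hγ : 0 < γ := by
    rw [hγdef, sub_pos, div_lt_div_iff₀ hWrp hArp]
    have hρ' : A ^ ((1:ℝ)/d) / W ^ ((1:ℝ)/d) < β := by
      rw [← Real.div_rpow hApos.le hWpos.le]; exact hβρ
    rw [div_lt_iff₀ hWrp] at hρ'
    linarith
  -- the B and t functions
  set BM : ℕ → ℝ := fun M => ((M:ℝ) / A) ^ ((1:ℝ)/d) with hBMdef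
  set tM : ℕ → ℝ := fun M => ((M:ℝ) / W) ^ ((1:ℝ)/d) with htMdef
  have hident : ∀ M : ℕ, β * BM M - tM M = γ * (M:ℝ) ^ ((1:ℝ)/d) := by
    intro M
    have h1 : BM M = (M:ℝ) ^ ((1:ℝ)/d) / A ^ ((1:ℝ)/d) :=
      Real.div_rpow (Nat.cast_nonneg M) hApos.le _
    have h2 : tM M = (M:ℝ) ^ ((1:ℝ)/d) / W ^ ((1:ℝ)/d) :=
      Real.div_rpow (Nat.cast_nonneg M) hWpos.le _
    rw [h1, h2, hγdef]; ring
  -- eventual conditions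
  have htendB : Tendsto BM atTop atTop := by
    apply (tendsto_rpow_atTop (by positivity : (0:ℝ) < 1/d)).comp
    exact tendsto_natCast_atTop_atTop.atTop_div_const hApos
  have htendγ : Tendsto (fun M : ℕ => Real.exp (γ * (M:ℝ) ^ ((1:ℝ)/d))) atTop atTop := by
    apply Real.tendsto_exp_atTop.comp
    apply Tendsto.const_mul_atTop hγ
    exact (tendsto_rpow_atTop (by positivity : (0:ℝ) < 1/d)).comp tendsto_natCast_atTop_atTop
  have hev : ∀ᶠ M : ℕ in atTop,
      1 ≤ M ∧ τ0 ≤ BM M ∧ S0 ≤ Real.exp (γ * (M:ℝ) ^ ((1:ℝ)/d)) := by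
    filter_upwards [eventually_ge_atTop 1, htendB.eventually_ge_atTop τ0,
      htendγ.eventually_ge_atTop S0] with M h1 h2 h3
    exact ⟨h1, h2, h3⟩
  obtain ⟨Mε, hMε⟩ := eventually_atTop.1 hev
  refine ⟨Mε, ?_⟩
  intro M hM Λ hΛcard hΛopt g hg y
  obtain ⟨h1M, h2M, h3M⟩ := hMε M hM
  have hMR : (1:ℝ) ≤ (M:ℝ) := by exact_mod_cast h1M
  -- every index outside Λ has b-value above BM M
  have hb_compl : ∀ μ : Fin d → ℕ, μ ∉ Λ → BM M < b (nuR μ) := by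
    intro μ hμ
    by_contra hle
    push_neg at hle
    have hFb : ∀ ν ∈ insert μ Λ, b (nuR ν) ≤ BM M := by
      intro ν hν
      rcases Finset.mem_insert.1 hν with rfl | hν'
      · exact hle
      · exact le_trans (hΛopt ν hν' μ hμ) hle
    have hcard : (insert μ Λ).card = M + 1 := by
      rw [Finset.card_insert_of_notMem hμ, hΛcard]
    have h := hcount (BM M) h2M _ hFb
    rw [hcard] at h
    have hBMd : A * (BM M) ^ d = M := by
      have h0 : (0:ℝ) ≤ (M:ℝ)/A := by positivity
      have : (BM M) ^ d = (M:ℝ)/A := by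
        rw [hBMdef]
        rw [← Real.rpow_natCast (((M:ℝ)/A) ^ ((1:ℝ)/d)) d, ← Real.rpow_mul h0,
          one_div, inv_mul_cancel₀ hdR.ne', Real.rpow_one]
      rw [this]
      field_simp
    rw [hBMd] at h
    push_cast at h
    linarith
  -- summability
  have habs : Summable (fun ν : Fin d → ℕ => |c ν * Ψ ν y|) := by
    apply Summable.of_nonneg_of_le (fun ν => abs_nonneg _) _ hsum
    intro ν
    rw [abs_mul]
    calc |c ν| * |Ψ ν y| ≤ |c ν| * 1 := mul_le_mul_of_nonneg_left (hΨ ν y) (abs_nonneg _)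
      _ = |c ν| := mul_one _
  have hsum1 : Summable (fun ν : Fin d → ℕ => c ν * Ψ ν y) := habs.of_abs
  have hsplit := Summable.sum_add_tsum_compl (s := Λ) hsum1
  set T : ℝ := ∑' (μ : ↥((↑Λ : Set (Fin d → ℕ))ᶜ)), c ↑μ * Ψ ↑μ y with hTdef
  have hudecomp : u y - ∑ ν ∈ Λ, c ν * g ν y =
      (∑ ν ∈ Λ, (c ν * Ψ ν y - c ν * g ν y)) + T := by
    rw [hu y, ← hsplit, Finset.sum_sub_distrib]
    ring
  -- bound on the substituted part
  set SM : ℝ := (2 * M / V) ^ ((1:ℝ)/d) with hSMdef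
  have hbound1 : |∑ ν ∈ Λ, (c ν * Ψ ν y - c ν * g ν y)| ≤ M * Real.exp (-SM) := by
    calc |∑ ν ∈ Λ, (c ν * Ψ ν y - c ν * g ν y)|
        ≤ ∑ ν ∈ Λ, |c ν * Ψ ν y - c ν * g ν y| := Finset.abs_sum_le_sum_abs _ _
      _ ≤ ∑ ν ∈ Λ, Real.exp (-SM) := by
          apply Finset.sum_le_sum
          intro ν hν
          rw [← mul_sub, abs_mul]
          calc |c ν| * |Ψ ν y - g ν y|
              ≤ Real.exp (-b (nuR ν)) * Real.exp (b (nuR ν) - SM) := by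
                apply mul_le_mul (hc ν) (hg ν hν y) (abs_nonneg _) (Real.exp_pos _).le
            _ = Real.exp (-SM) := by rw [← Real.exp_add]; ring_nf
      _ = M * Real.exp (-SM) := by
          rw [Finset.sum_const, hΛcard, nsmul_eq_mul]
  -- bound on the tail
  have hmemc : ∀ μ : ↥((↑Λ : Set (Fin d → ℕ))ᶜ), (μ : Fin d → ℕ) ∉ Λ :=
    fun μ h => μ.2 (Finset.mem_coe.2 h)
  have hs2 : Summable (fun μ : ↥((↑Λ : Set (Fin d → ℕ))ᶜ) => |c ↑μ * Ψ ↑μ y|) :=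
    habs.subtype _
  have hbound2 : |T| ≤ Real.exp (-(tM M)) := by
    have h1 : |T| ≤ ∑' (μ : ↥((↑Λ : Set (Fin d → ℕ))ᶜ)), |c ↑μ * Ψ ↑μ y| :=
      norm_tsum_le_tsum_norm (f := fun μ : ↥((↑Λ : Set (Fin d → ℕ))ᶜ) => c ↑μ * Ψ ↑μ y) hs2
    have h2 : ∑' (μ : ↥((↑Λ : Set (Fin d → ℕ))ᶜ)), |c ↑μ * Ψ ↑μ y| ≤
        ∑' (μ : ↥((↑Λ : Set (Fin d → ℕ))ᶜ)),
          (Real.exp (-(β * BM M)) * Real.exp (-θ * b (nuR ↑μ))) := by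
      apply Summable.tsum_le_tsum _ hs2 ((hS.mul_left _).subtype _)
      intro μ
      have hbμ : BM M < b (nuR ↑μ) := hb_compl _ (hmemc μ)
      calc |c ↑μ * Ψ ↑μ y| ≤ |c ↑μ| := by
            rw [abs_mul]
            calc |c ↑μ| * |Ψ ↑μ y| ≤ |c ↑μ| * 1 :=
                  mul_le_mul_of_nonneg_left (hΨ _ y) (abs_nonneg _)
              _ = |c ↑μ| := mul_one _
        _ ≤ Real.exp (-b (nuR ↑μ)) := hc _
        _ = Real.exp (-(β * b (nuR ↑μ))) * Real.exp (-θ * b (nuR ↑μ)) := by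
            rw [← Real.exp_add, hθdef]; ring_nf
        _ ≤ Real.exp (-(β * BM M)) * Real.exp (-θ * b (nuR ↑μ)) := by
            have hle : -(β * b (nuR ↑μ)) ≤ -(β * BM M) :=
              neg_le_neg (mul_le_mul_of_nonneg_left hbμ.le hβ0.le)
            exact mul_le_mul_of_nonneg_right (Real.exp_le_exp.2 hle) (Real.exp_pos _).le
    have h3 : ∑' (μ : ↥((↑Λ : Set (Fin d → ℕ))ᶜ)),
        (Real.exp (-(β * BM M)) * Real.exp (-θ * b (nuR ↑μ))) =
        Real.exp (-(β * BM M)) * ∑' (μ : ↥((↑Λ : Set (Fin d → ℕ))ᶜ)),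
          Real.exp (-θ * b (nuR ↑μ)) :=
      tsum_mul_left (a := Real.exp (-(β * BM M)))
        (f := fun μ : ↥((↑Λ : Set (Fin d → ℕ))ᶜ) => Real.exp (-θ * b (nuR ↑μ)))
    have h4 : ∑' (μ : ↥((↑Λ : Set (Fin d → ℕ))ᶜ)), Real.exp (-θ * b (nuR ↑μ)) ≤ S0 :=
      Summable.tsum_le_tsum_of_inj
        (f := fun μ : ↥((↑Λ : Set (Fin d → ℕ))ᶜ) => Real.exp (-θ * b (nuR ↑μ)))
        (g := fun ν : Fin d → ℕ => Real.exp (-θ * b (nuR ν)))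
        (Subtype.val) Subtype.val_injective
        (fun _ _ => (Real.exp_pos _).le) (fun _ => le_rfl) (hS.subtype _) hS
    have h5 : Real.exp (-(β * BM M)) * S0 ≤ Real.exp (-(tM M)) := by
      calc Real.exp (-(β * BM M)) * S0
          ≤ Real.exp (-(β * BM M)) * Real.exp (γ * (M:ℝ) ^ ((1:ℝ)/d)) :=
            mul_le_mul_of_nonneg_left h3M (Real.exp_pos _).le
        _ = Real.exp (-(tM M)) := by
            rw [← Real.exp_add, ← hident M]; ring_nf
    have h6 := mul_le_mul_of_nonneg_left h4 (Real.exp_pos (-(β * BM M))).le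
    linarith
  -- combine
  have hCu : 1 ≤ Cu ε := one_le_Cu hε
  have hCuM : 1 ≤ Cu ε * M := by
    calc (1:ℝ) ≤ Cu ε := hCu
      _ = Cu ε * 1 := (mul_one _).symm
      _ ≤ Cu ε * M := mul_le_mul_of_nonneg_left hMR (by linarith)
  have hmain : |u y - ∑ ν ∈ Λ, c ν * g ν y| ≤
      Cu ε * M * Real.exp (-(tM M)) + M * Real.exp (-SM) := by
    rw [hudecomp]
    calc |(∑ ν ∈ Λ, (c ν * Ψ ν y - c ν * g ν y)) + T|
        ≤ |∑ ν ∈ Λ, (c ν * Ψ ν y - c ν * g ν y)| + |T| := abs_add_le _ _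
      _ ≤ M * Real.exp (-SM) + Real.exp (-(tM M)) := add_le_add hbound1 hbound2
      _ = Real.exp (-(tM M)) + M * Real.exp (-SM) := by ring
      _ ≤ Cu ε * M * Real.exp (-(tM M)) + M * Real.exp (-SM) := by
          have hstep : Real.exp (-(tM M)) ≤ Cu ε * M * Real.exp (-(tM M)) := by
            calc Real.exp (-(tM M)) = 1 * Real.exp (-(tM M)) := (one_mul _).symm
              _ ≤ Cu ε * M * Real.exp (-(tM M)) :=
                  mul_le_mul_of_nonneg_right hCuM (Real.exp_pos _).le
          exact add_le_add hstep le_rfl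
  have htSM : tM M ≤ SM := by
    rw [htMdef, hSMdef]
    apply Real.rpow_le_rpow (by positivity) _ (by positivity)
    rw [div_le_div_iff₀ hWpos hV, hWdef]
    exact aux_ineq _ _ _ (Nat.cast_nonneg M) hV.le hε.le
  constructor
  · exact hmain
  · 
    have hexp : Real.exp (-SM) ≤ Real.exp (-(tM M)) := Real.exp_le_exp.2 (by linarith)
    have : M * Real.exp (-SM) ≤ M * Real.exp (-(tM M)) :=
      mul_le_mul_of_nonneg_left hexp (by positivity)
    calc |u y - ∑ ν ∈ Λ, c ν * g ν y|
        ≤ Cu ε * M * Real.exp (-(tM M)) + M * Real.exp (-SM) := hmain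
      _ ≤ Cu ε * M * Real.exp (-(tM M)) + M * Real.exp (-(tM M)) :=
          add_le_add le_rfl this
      _ = (Cu ε + 1) * M * Real.exp (-(tM M)) := by ring


end
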